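/- Let g : ℝ^d → ℝ ∪ {+∞} be proper convex lower semicontinuous, let F_1,…,F_n : ℝ^d → ℝ^d each be L-Lipschitz and μ-strongly monotone (so 0 < μ ≤ L), F = (1/n)∑_i F_i, and let z* solve the variational inequality for (F, g). Fix α ∈ (0,1) and γ > 0 with γ ≤ (1−α)μ/(6L²) and α ≥ γμ/2, an index i ∈ {1,…,n}, and points z, ω ∈ ℝ^d. Define z̄ = α z + (1−α) ω, z^{1/2} = prox_{γg}(z̄ − γ F(ω)), F̂ = F_i(z^{1/2}) − F_i(ω) + F(ω), and z⁺ = prox_{γg}(z̄ − γ F̂). Then: ‖z⁺ − z*‖² ≤ (α − γμ/4)‖z − z*‖² + (1 − α − γμ/4)‖ω − z*‖². -/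

import Mathlib

open scoped RealInnerProductSpace

set_option maxHeartbeats 1000000



section TP
variable {E : Type*} [NormedAddCommGroup E] [InnerProductSpace ℝ E]

lemma prox_ne_top (γ : ℝ) (hγ : 0 < γ) (g : E → EReal)
    (hg_bot : ∀ x, g x ≠ ⊥) (hg_top : ∃ x, g x ≠ ⊤)
    (prox : E → E)
    (hprox : ∀ x y : E, (γ : EReal) * g (prox x) + ((‖prox x - x‖ ^ 2 / 2 : ℝ) : EReal)
        ≤ (γ : EReal) * g y + ((‖y - x‖ ^ 2 / 2 : ℝ) : EReal)) (x : E) :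
    g (prox x) ≠ ⊤ := by
  obtain ⟨y₀, hy₀⟩ := hg_top
  have h := hprox x y₀
  have hgy : g y₀ = (((g y₀).toReal : ℝ) : EReal) := (EReal.coe_toReal hy₀ (hg_bot y₀)).symm
  rw [hgy] at h
  intro htop
  rw [htop] at h
  rw [EReal.coe_mul_top_of_pos hγ] at h
  rw [EReal.top_add_coe] at h
  have : ((γ * (g y₀).toReal + ‖y₀ - x‖ ^ 2 / 2 : ℝ) : EReal) = ⊤ := by
    refine top_le_iff.mp ?_
    calc (⊤ : EReal) ≤ (γ:EReal) * ((g y₀).toReal : ℝ) + ((‖y₀ - x‖ ^ 2 / 2 : ℝ) : EReal) := h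
    _ = _ := by norm_cast
  exact EReal.coe_ne_top _ this

lemma prox_threepoint (γ : ℝ) (hγ : 0 < γ) (g : E → EReal)
    (hg_bot : ∀ x, g x ≠ ⊥) (hg_top : ∃ x, g x ≠ ⊤)
    (hg_convex : ∀ (x y : E) (a b : ℝ), 0 ≤ a → 0 ≤ b → a + b = 1 →
      g (a • x + b • y) ≤ (a : EReal) * g x + (b : EReal) * g y)
    (prox : E → E)
    (hprox : ∀ x y : E, (γ : EReal) * g (prox x) + ((‖prox x - x‖ ^ 2 / 2 : ℝ) : EReal)
        ≤ (γ : EReal) * g y + ((‖y - x‖ ^ 2 / 2 : ℝ) : EReal))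
    (x y : E) (hy : g y ≠ ⊤) :
    2*γ*(g (prox x)).toReal + ‖y - prox x‖^2 + ‖prox x - x‖^2
      ≤ 2*γ*(g y).toReal + ‖y - x‖^2 := by
  set p := prox x with hp
  have hpt : g p ≠ ⊤ := prox_ne_top γ hγ g hg_bot hg_top prox hprox x
  set Gp := (g p).toReal with hGp
  set Gy := (g y).toReal with hGy
  have hgp : g p = ((Gp : ℝ) : EReal) := (EReal.coe_toReal hpt (hg_bot p)).symm
  have hgy : g y = ((Gy : ℝ) : EReal) := (EReal.coe_toReal hy (hg_bot y)).symm
  have hreal : ∀ t : ℝ, 0 < t → t ≤ 1 →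
      γ*(Gp - Gy) ≤ ⟪p - x, y - p⟫ + t*(‖y-p‖^2/2) := by
    intro t ht0 ht1
    have hconv := hg_convex p y (1-t) t (by linarith) ht0.le (by ring)
    rw [hgp, hgy] at hconv
    have hco : ((1-t : ℝ) : EReal) * ((Gp:ℝ) : EReal) + ((t:ℝ) : EReal)*((Gy:ℝ) : EReal)
        = (((1-t)*Gp + t*Gy : ℝ) : EReal) := by norm_cast
    rw [hco] at hconv
    have hytt : g ((1-t) • p + t • y) ≠ ⊤ := ne_top_of_le_ne_top (EReal.coe_ne_top _) hconv
    have hytb : g ((1-t) • p + t • y) ≠ ⊥ := hg_bot _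
    have hytR : (g ((1-t) • p + t • y)).toReal ≤ (1-t)*Gp + t*Gy := by
      have h2 := EReal.toReal_le_toReal hconv hytb (EReal.coe_ne_top _)
      rwa [EReal.toReal_coe] at h2
    have hpx := hprox x ((1-t) • p + t • y)
    rw [← hp, hgp, (EReal.coe_toReal hytt hytb).symm] at hpx
    have hpx' : γ*Gp + ‖p - x‖^2/2
        ≤ γ*(g ((1-t) • p + t • y)).toReal + ‖(1-t) • p + t • y - x‖^2/2 := by
      exact_mod_cast hpx
    have hyt : (1-t) • p + t • y - x = (p - x) + t • (y - p) := by module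
    have hexp : ‖(1-t) • p + t • y - x‖^2
        = ‖p-x‖^2 + 2*t*⟪p-x, y-p⟫ + t^2*‖y-p‖^2 := by
      rw [hyt, norm_add_sq_real, real_inner_smul_right, norm_smul, Real.norm_eq_abs,
        mul_pow, sq_abs]
      ring
    have hmono : γ*(g ((1-t) • p + t • y)).toReal ≤ γ*((1-t)*Gp + t*Gy) :=
      mul_le_mul_of_nonneg_left hytR hγ.le
    rw [hexp] at hpx'
    have hfin : t*(γ*(Gp - Gy)) ≤ t*(⟪p-x, y-p⟫ + t*(‖y-p‖^2/2)) := by nlinarith [hpx', hmono]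
    exact (mul_le_mul_iff_right₀ ht0).mp hfin
  have hmain : γ*(Gp - Gy) ≤ ⟪p - x, y - p⟫ := by
    by_contra hcon
    push_neg at hcon
    set c := γ*(Gp-Gy) - ⟪p-x, y-p⟫ with hc
    have hcpos : 0 < c := by simp only [hc]; linarith
    set N := ‖y-p‖^2/2 with hN
    have hNn : 0 ≤ N := by positivity
    have ht0 : 0 < min 1 (c/(N+1)) := lt_min one_pos (div_pos hcpos (by linarith))
    have hge := hreal _ ht0 (min_le_left _ _)
    have hlt : min 1 (c/(N+1)) * N < c := by
      have h1 : min 1 (c/(N+1)) ≤ c/(N+1) := min_le_right _ _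
      have h2 : min 1 (c/(N+1)) * N ≤ (c/(N+1))*N := mul_le_mul_of_nonneg_right h1 hNn
      have h3 : (c/(N+1))*N < c := by
        rw [div_mul_eq_mul_div, div_lt_iff₀ (by linarith : (0:ℝ) < N+1)]
        nlinarith
      linarith
    linarith
  have hyx : y - x = (y-p) + (p-x) := by abel
  have hpolar : ‖y - x‖^2 = ‖y-p‖^2 + 2*⟪p-x, y-p⟫ + ‖p-x‖^2 := by
    rw [hyx, norm_add_sq_real, real_inner_comm]
    try ring
  linarith [hmain, hpolar]

end TP



lemma cert_scalar (al k : ℝ) (h0 : 0 < al) (h1 : al < 1) (hk : 0 < k) (hk2 : k ≤ 2*al)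
    (hk6 : k ≤ (1-al)/6) :
    0 ≤ 32*al + 32*al^2 - 64*al^3 - 12*k - 128*al*k + 16*al^2*k + 16*al^3*k
      + 42*k^2 + 104*al*k^2 - 64*al^2*k^2 + 8*al^3*k^2 - 36*k^3 + 21*al*k^3 - 3*al^2*k^3 := by
  have p1 : 0 ≤ 2*al - k := by linarith
  have p2 : 0 ≤ 1 - al - 6*k := by linarith
  have ha : 0 ≤ al := h0.le
  have hk' : 0 ≤ k := hk.le
  nlinarith [mul_nonneg (mul_nonneg p1 p2) hk', mul_nonneg (mul_nonneg p1 p2) ha,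
    mul_nonneg (mul_nonneg p1 p1) ha, mul_nonneg (mul_nonneg p1 p2) p2,
    mul_nonneg (mul_nonneg p1 p1) p2, mul_nonneg (mul_nonneg p1 p1) hk',
    mul_nonneg (mul_nonneg ha ha) p1, mul_nonneg (mul_nonneg ha ha) p2,
    mul_nonneg (mul_nonneg hk' hk') p1, mul_nonneg (mul_nonneg hk' hk') p2,
    mul_nonneg (mul_nonneg ha hk') p1, mul_nonneg (mul_nonneg ha hk') p2,
    mul_nonneg (mul_nonneg ha p1) p2, mul_nonneg (mul_nonneg hk' p1) p2,
    mul_nonneg (mul_nonneg (mul_nonneg ha ha) p1) p2,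
    mul_nonneg (mul_nonneg (mul_nonneg ha hk') p1) p2,
    mul_nonneg (mul_nonneg (mul_nonneg hk' hk') p1) p2,
    mul_nonneg (mul_nonneg (mul_nonneg ha ha) hk') p1,
    mul_nonneg (mul_nonneg (mul_nonneg ha ha) hk') p2,
    sq_nonneg (al - k), sq_nonneg (2*al - k), sq_nonneg k, sq_nonneg al]

lemma key_vector {E : Type*} [NormedAddCommGroup E] [InnerProductSpace ℝ E]
    (p q w : E) (al k f : ℝ) (h0 : 0 < al) (h1 : al < 1) (hk : 0 < k)
    (hk2 : k ≤ 2*al) (hk6 : k ≤ (1-al)/6) (hf : 0 ≤ f) (hf2 : f^2 ≤ k*(1-al)/6) :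
    k/4*(‖(q-p)+(1-al)•w‖^2 + ‖(q-p)-al•w‖^2) + 4*f*(‖p+al•w‖*‖q‖) + f^2*‖p+al•w‖^2
      ≤ ‖p‖^2 + 2*k*‖q‖^2 + al*(1-al)*‖w‖^2 := by
  set P := ‖p‖^2 with hP
  set r2 := ‖q‖^2 with hr2
  set W := ‖w‖^2 with hW
  set X := ⟪p, q⟫ with hX
  set Y := ⟪p, w⟫ with hY
  set V := ⟪q, w⟫ with hV
  have hPn : 0 ≤ P := sq_nonneg _
  have hr2n : 0 ≤ r2 := sq_nonneg _
  have hWn : 0 ≤ W := sq_nonneg _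
  have expand : ∀ (a b c : ℝ), ‖a • p + b • q + c • w‖^2
      = a^2*P + b^2*r2 + c^2*W + 2*a*b*X + 2*a*c*Y + 2*b*c*V := by
    intro a b c
    rw [← real_inner_self_eq_norm_sq]
    simp only [inner_add_left, inner_add_right, real_inner_smul_left, real_inner_smul_right,
      real_inner_self_eq_norm_sq, norm_smul, Real.norm_eq_abs, mul_pow, sq_abs]
    rw [hX, hY, hV, real_inner_comm p q, real_inner_comm p w, real_inner_comm q w]
    ring
  have eA : ‖(q-p)+(1-al)•w‖^2 = P + r2 + (1-al)^2*W - 2*X - 2*(1-al)*Y + 2*(1-al)*V := by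
    have h : (q-p)+(1-al)•w = (-1 : ℝ) • p + (1 : ℝ) • q + (1-al) • w := by module
    rw [h, expand]; ring
  have eB : ‖(q-p)-al•w‖^2 = P + r2 + al^2*W - 2*X + 2*al*Y - 2*al*V := by
    have h : (q-p)-al•w = (-1 : ℝ) • p + (1 : ℝ) • q + (-al) • w := by module
    rw [h, expand]; ring
  have eU : ‖p+al•w‖^2 = P + 2*al*Y + al^2*W := by
    have h : p+al•w = (1 : ℝ) • p + (0 : ℝ) • q + al • w := by module
    rw [h, expand]; ring
  have young : 4*f*(‖p+al•w‖*‖q‖) + f^2*‖p+al•w‖^2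
      ≤ ((1-al)*(4+k)/6)*‖p+al•w‖^2 + k*r2 := by
    have hu : 0 ≤ ‖p+al•w‖ := norm_nonneg _
    have hqn : 0 ≤ ‖q‖ := norm_nonneg _
    have hsq := sq_nonneg (2*f*‖p+al•w‖ - k*‖q‖)
    have hg2 : 4*f^2 + k*f^2 ≤ k*((1-al)*(4+k)/6) := by nlinarith [hf2, hk.le]
    have h1 : 4*f*k*(‖p+al•w‖*‖q‖) ≤ 4*f^2*‖p+al•w‖^2 + k^2*‖q‖^2 := by nlinarith [hsq]
    have h2 : k*f^2*‖p+al•w‖^2 + 4*f^2*‖p+al•w‖^2 ≤ k*((1-al)*(4+k)/6)*‖p+al•w‖^2 := by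
      have := mul_nonneg (by linarith : (0:ℝ) ≤ k*((1-al)*(4+k)/6) - (4*f^2 + k*f^2))
        (sq_nonneg (‖p+al•w‖))
      nlinarith [this]
    have hmul : k*(4*f*(‖p+al•w‖*‖q‖) + f^2*‖p+al•w‖^2)
        ≤ k*(((1-al)*(4+k)/6)*‖p+al•w‖^2 + k*r2) := by
      rw [hr2]; nlinarith [h1, h2]
    exact le_of_mul_le_mul_left hmul hk
  have step : k/4*(‖(q-p)+(1-al)•w‖^2 + ‖(q-p)-al•w‖^2)
      + ((1-al)*(4+k)/6)*‖p+al•w‖^2 + k*r2 ≤ P + 2*k*r2 + al*(1-al)*W := by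
    rw [eA, eB, eU]
    set cpp := 1 - k/2 - (1-al)*(4+k)/6 with hcppdef
    set cpw := k/2*(1-2*al) - 2*al*((1-al)*(4+k)/6) with hcpwdef
    set ap := 2*cpp - k with hapdef
    set cp := 2*cpp*(1-2*al) + 2*cpw with hcpdef
    have hcpp : 0 < cpp := by rw [hcppdef]; nlinarith
    have hap : 0 < ap := by rw [hapdef, hcppdef]; nlinarith
    have hS1 : (0:ℝ) ≤ (2*cpp)^2*P + k^2*r2 + cpw^2*W + 2*(2*cpp)*k*X + 2*(2*cpp)*cpw*Y
        + 2*k*cpw*V := by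
      have h := sq_nonneg ‖(2*cpp) • p + k • q + cpw • w‖
      rwa [expand (2*cpp) k cpw] at h
    have hS2 : (0:ℝ) ≤ (0:ℝ)^2*P + (2*ap)^2*r2 + (-cp)^2*W + 2*0*(2*ap)*X + 2*0*(-cp)*Y
        + 2*(2*ap)*(-cp)*V := by
      have h := sq_nonneg ‖(0:ℝ) • p + (2*ap) • q + (-cp) • w‖
      rwa [expand 0 (2*ap) (-cp)] at h
    have hD2 := cert_scalar al k h0 h1 hk hk2 hk6
    have key : 144*cpp*ap*((P + 2*k*r2 + al*(1-al)*W)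
          - (k/4*((P + r2 + (1-al)^2*W - 2*X - 2*(1-al)*Y + 2*(1-al)*V)
              + (P + r2 + al^2*W - 2*X + 2*al*Y - 2*al*V))
            + ((1-al)*(4+k)/6)*(P + 2*al*Y + al^2*W) + k*r2))
        = 36*ap*((2*cpp)^2*P + k^2*r2 + cpw^2*W + 2*(2*cpp)*k*X + 2*(2*cpp)*cpw*Y + 2*k*cpw*V)
          + 9*k*((0:ℝ)^2*P + (2*ap)^2*r2 + (-cp)^2*W + 2*0*(2*ap)*X + 2*0*(-cp)*Y
              + 2*(2*ap)*(-cp)*V)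
          + (32*al + 32*al^2 - 64*al^3 - 12*k - 128*al*k + 16*al^2*k + 16*al^3*k
            + 42*k^2 + 104*al*k^2 - 64*al^2*k^2 + 8*al^3*k^2 - 36*k^3 + 21*al*k^3
            - 3*al^2*k^3)*W := by
      rw [hcpdef, hapdef, hcpwdef, hcppdef]; ring
    have hrhs : (0:ℝ) ≤ 144*cpp*ap*((P + 2*k*r2 + al*(1-al)*W)
          - (k/4*((P + r2 + (1-al)^2*W - 2*X - 2*(1-al)*Y + 2*(1-al)*V)
              + (P + r2 + al^2*W - 2*X + 2*al*Y - 2*al*V))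
            + ((1-al)*(4+k)/6)*(P + 2*al*Y + al^2*W) + k*r2)) := by
      rw [key]
      have t1 := mul_nonneg (by linarith : (0:ℝ) ≤ 36*ap) hS1
      have t2 := mul_nonneg (by linarith : (0:ℝ) ≤ 9*k) hS2
      have t3 := mul_nonneg hD2 hWn
      linarith
    have h16 : (0:ℝ) < 144*cpp*ap := by positivity
    have h0' : 144*cpp*ap*(0:ℝ) ≤ 144*cpp*ap*((P + 2*k*r2 + al*(1-al)*W)
          - (k/4*((P + r2 + (1-al)^2*W - 2*X - 2*(1-al)*Y + 2*(1-al)*V)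
              + (P + r2 + al^2*W - 2*X + 2*al*Y - 2*al*V))
            + ((1-al)*(4+k)/6)*(P + 2*al*Y + al^2*W) + k*r2)) := by
      rw [mul_zero]; exact hrhs
    have hfin := le_of_mul_le_mul_left h0' h16
    linarith
  linarith [young, step]


set_option maxHeartbeats 2000000 in
/-- One step of variance-reduced extragradient with `γ ≤ (1−α)μ/(6L²)` and `α ≥ γμ/2`:
with `z̄ = αz + (1−α)ω`, `z½ = prox_{γg}(z̄ − γF(ω))`, `F̂ = F_i(z½) − F_i(ω) + F(ω)`,
`z⁺ = prox_{γg}(z̄ − γF̂)`, one has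
`‖z⁺ − z*‖² ≤ (α − γμ/4)‖z − z*‖² + (1 − α − γμ/4)‖ω − z*‖²`. -/
theorem vr_extragradient_one_step_contraction
    (d n : ℕ) (hn : 1 ≤ n) (L μ γ α : ℝ) (hL : 0 < L) (hμ : 0 < μ)
    (hγ : 0 < γ) (hα : α ∈ Set.Ioo (0 : ℝ) 1)
    (hμL : μ ≤ L) (hγle : γ ≤ (1 - α) * μ / (6 * L ^ 2)) (hαγ : γ * μ / 2 ≤ α)
    (g : EuclideanSpace ℝ (Fin d) → EReal)
    (hg_bot : ∀ x, g x ≠ ⊥) (hg_top : ∃ x, g x ≠ ⊤)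
    (hg_convex : ∀ (x y : EuclideanSpace ℝ (Fin d)) (a b : ℝ), 0 ≤ a → 0 ≤ b → a + b = 1 →
      g (a • x + b • y) ≤ (a : EReal) * g x + (b : EReal) * g y)
    (hg_lsc : LowerSemicontinuous g)
    (prox : EuclideanSpace ℝ (Fin d) → EuclideanSpace ℝ (Fin d))
    (hprox : ∀ x y : EuclideanSpace ℝ (Fin d),
      (γ : EReal) * g (prox x) + ((‖prox x - x‖ ^ 2 / 2 : ℝ) : EReal)
        ≤ (γ : EReal) * g y + ((‖y - x‖ ^ 2 / 2 : ℝ) : EReal))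
    (F : Fin n → EuclideanSpace ℝ (Fin d) → EuclideanSpace ℝ (Fin d))
    (hLip : ∀ (i : Fin n) (z₁ z₂ : EuclideanSpace ℝ (Fin d)),
      ‖F i z₁ - F i z₂‖ ≤ L * ‖z₁ - z₂‖)
    (hmono : ∀ (i : Fin n) (z₁ z₂ : EuclideanSpace ℝ (Fin d)),
      μ * ‖z₁ - z₂‖ ^ 2 ≤ ⟪F i z₁ - F i z₂, z₁ - z₂⟫)
    (zstar : EuclideanSpace ℝ (Fin d)) (hzstar : g zstar ≠ ⊤)
    (hVI : ∀ z, g zstar ≤ ((⟪(n : ℝ)⁻¹ • ∑ j, F j zstar, z - zstar⟫ : ℝ) : EReal) + g z)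
    (i : Fin n) (z ω zbar zhalf Fhat zplus : EuclideanSpace ℝ (Fin d))
    (hzbar : zbar = α • z + (1 - α) • ω)
    (hzhalf : zhalf = prox (zbar - γ • ((n : ℝ)⁻¹ • ∑ j, F j ω)))
    (hFhat : Fhat = F i zhalf - F i ω + (n : ℝ)⁻¹ • ∑ j, F j ω)
    (hzplus : zplus = prox (zbar - γ • Fhat)) :
    ‖zplus - zstar‖ ^ 2
      ≤ (α - γ * μ / 4) * ‖z - zstar‖ ^ 2
        + (1 - α - γ * μ / 4) * ‖ω - zstar‖ ^ 2 := by
  obtain ⟨hα0, hα1⟩ := hα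
  have hnpos : (0:ℝ) < n := by exact_mod_cast hn
  have hL2 : (0:ℝ) < 6*L^2 := by positivity
  have h1 : γ*(6*L^2) ≤ (1-α)*μ := by
    rw [← le_div_iff₀ hL2]; linarith [hγle]
  have hk2 : γ*μ ≤ 2*α := by linarith
  have hk6 : γ*μ ≤ (1-α)/6 := by
    nlinarith [mul_le_mul_of_nonneg_right h1 hμ.le, mul_pos hL hL,
      mul_nonneg (by linarith : (0:ℝ) ≤ 1-α)
        (by nlinarith : (0:ℝ) ≤ L^2 - μ^2)]
  have hkpos : 0 < γ*μ := mul_pos hγ hμ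
  have hf2 : (γ*L)^2 ≤ (γ*μ)*(1-α)/6 := by
    nlinarith [mul_le_mul_of_nonneg_left h1 hγ.le]
  have hfpos : (0:ℝ) ≤ γ*L := by positivity
  -- finiteness
  have hhalf_top : g zhalf ≠ ⊤ := by
    rw [hzhalf]; exact prox_ne_top γ hγ g hg_bot hg_top prox hprox _
  have hplus_top : g zplus ≠ ⊤ := by
    rw [hzplus]; exact prox_ne_top γ hγ g hg_bot hg_top prox hprox _
  -- three-point inequalities
  have P1 := prox_threepoint γ hγ g hg_bot hg_top hg_convex prox hprox
    (zbar - γ • Fhat) zstar hzstar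
  rw [← hzplus] at P1
  have P2 := prox_threepoint γ hγ g hg_bot hg_top hg_convex prox hprox
    (zbar - γ • ((n : ℝ)⁻¹ • ∑ j, F j ω)) zplus hplus_top
  rw [← hzhalf] at P2
  -- VI in real form
  have hVIh := hVI zhalf
  rw [show g zstar = (((g zstar).toReal : ℝ) : EReal) from
      (EReal.coe_toReal hzstar (hg_bot _)).symm,
    show g zhalf = (((g zhalf).toReal : ℝ) : EReal) from
      (EReal.coe_toReal hhalf_top (hg_bot _)).symm] at hVIh
  have hVIr : (g zstar).toReal
      ≤ ⟪(n : ℝ)⁻¹ • ∑ j, F j zstar, zhalf - zstar⟫ + (g zhalf).toReal := by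
    exact_mod_cast hVIh
  -- quadratic expansion
  have hquad : ∀ (a v : EuclideanSpace ℝ (Fin d)), ‖a - (zbar - γ•v)‖^2
      = ‖a - zbar‖^2 + 2*γ*⟪a - zbar, v⟫ + γ^2*‖v‖^2 := by
    intro a v
    have h : a - (zbar - γ•v) = (a - zbar) + γ•v := by module
    rw [h, norm_add_sq_real, real_inner_smul_right, norm_smul, Real.norm_eq_abs,
      mul_pow, sq_abs]
    ring
  have e1 := hquad zstar Fhat
  have e2 := hquad zplus Fhat
  have e3 := hquad zhalf ((n : ℝ)⁻¹ • ∑ j, F j ω)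
  have e4 := hquad zplus ((n : ℝ)⁻¹ • ∑ j, F j ω)
  rw [norm_sub_rev zstar zplus] at P1
  rw [norm_sub_rev zstar zbar] at e1
  have hVIr2 := mul_le_mul_of_nonneg_left hVIr (by positivity : (0:ℝ) ≤ 2*γ)
  have base0 : ‖zplus - zstar‖^2 + ‖zplus - zhalf‖^2 + ‖zhalf - zbar‖^2
      ≤ ‖zbar - zstar‖^2 + 2*γ*(⟪zstar - zbar, Fhat⟫ - ⟪zplus - zbar, Fhat⟫
        + ⟪zplus - zbar, (n : ℝ)⁻¹ • ∑ j, F j ω⟫ - ⟪zhalf - zbar, (n : ℝ)⁻¹ • ∑ j, F j ω⟫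
        + ⟪(n : ℝ)⁻¹ • ∑ j, F j zstar, zhalf - zstar⟫) := by
    linarith [P1, P2, hVIr2, e1, e2, e3, e4]
  -- rearrange the inner product terms
  have hTid : ⟪zstar - zbar, Fhat⟫ - ⟪zplus - zbar, Fhat⟫
        + ⟪zplus - zbar, (n : ℝ)⁻¹ • ∑ j, F j ω⟫ - ⟪zhalf - zbar, (n : ℝ)⁻¹ • ∑ j, F j ω⟫
        + ⟪(n : ℝ)⁻¹ • ∑ j, F j zstar, zhalf - zstar⟫
      = ⟪Fhat - (n : ℝ)⁻¹ • ∑ j, F j ω, zhalf - zplus⟫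
        - ⟪Fhat - (n : ℝ)⁻¹ • ∑ j, F j zstar, zhalf - zstar⟫ := by
    simp only [inner_sub_left, inner_sub_right]
    rw [real_inner_comm zstar Fhat, real_inner_comm zplus Fhat,
      real_inner_comm zplus ((n : ℝ)⁻¹ • ∑ j, F j ω),
      real_inner_comm zhalf ((n : ℝ)⁻¹ • ∑ j, F j ω)]
    ring
  -- average operator facts
  have havgsub : ∀ v₁ v₂ : EuclideanSpace ℝ (Fin d),
      ((n : ℝ)⁻¹ • ∑ j, F j v₁) - ((n : ℝ)⁻¹ • ∑ j, F j v₂)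
        = (n : ℝ)⁻¹ • ∑ j, (F j v₁ - F j v₂) := by
    intro v₁ v₂
    rw [Finset.sum_sub_distrib, smul_sub]
  have havglip : ∀ v₁ v₂ : EuclideanSpace ℝ (Fin d),
      ‖((n : ℝ)⁻¹ • ∑ j, F j v₁) - ((n : ℝ)⁻¹ • ∑ j, F j v₂)‖ ≤ L*‖v₁ - v₂‖ := by
    intro v₁ v₂
    rw [havgsub, norm_smul, Real.norm_eq_abs, abs_of_pos (inv_pos.2 hnpos)]
    have h2 : ‖∑ j, (F j v₁ - F j v₂)‖ ≤ ∑ _j : Fin n, L*‖v₁ - v₂‖ :=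
      norm_sum_le_of_le _ (fun j _ => hLip j v₁ v₂)
    have h3 : (∑ _j : Fin n, L*‖v₁ - v₂‖) = (n:ℝ) * (L*‖v₁-v₂‖) := by
      rw [Finset.sum_const, Finset.card_univ, Fintype.card_fin, nsmul_eq_mul]
    calc (n:ℝ)⁻¹ * ‖∑ j, (F j v₁ - F j v₂)‖ ≤ (n:ℝ)⁻¹ * ((n:ℝ) * (L*‖v₁-v₂‖)) := by
          rw [← h3]; exact mul_le_mul_of_nonneg_left h2 (by positivity)
      _ = L*‖v₁-v₂‖ := by field_simp
  have havgmono : μ*‖zhalf - zstar‖^2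
      ≤ ⟪((n : ℝ)⁻¹ • ∑ j, F j zhalf) - ((n : ℝ)⁻¹ • ∑ j, F j zstar), zhalf - zstar⟫ := by
    rw [havgsub, real_inner_smul_left, sum_inner]
    have h2 : (∑ _j : Fin n, μ*‖zhalf - zstar‖^2)
        ≤ ∑ j, ⟪F j zhalf - F j zstar, zhalf - zstar⟫ :=
      Finset.sum_le_sum (fun j _ => hmono j zhalf zstar)
    have h3 : (∑ _j : Fin n, μ*‖zhalf - zstar‖^2) = (n:ℝ) * (μ*‖zhalf-zstar‖^2) := by
      rw [Finset.sum_const, Finset.card_univ, Fintype.card_fin, nsmul_eq_mul]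
    rw [h3] at h2
    have h4 := mul_le_mul_of_nonneg_left h2 (by positivity : (0:ℝ) ≤ (n:ℝ)⁻¹)
    have h5 : (n:ℝ)⁻¹ * ((n:ℝ) * (μ*‖zhalf-zstar‖^2)) = μ*‖zhalf-zstar‖^2 := by field_simp
    linarith [h4, h5.symm.le]
  -- piece 1
  have piece1 : ⟪Fhat - (n : ℝ)⁻¹ • ∑ j, F j ω, zhalf - zplus⟫
      ≤ L*‖zhalf - ω‖*‖zplus - zhalf‖ := by
    have hFd : Fhat - (n : ℝ)⁻¹ • ∑ j, F j ω = F i zhalf - F i ω := by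
      rw [hFhat]; abel
    rw [hFd, norm_sub_rev zplus zhalf]
    calc ⟪F i zhalf - F i ω, zhalf - zplus⟫ ≤ ‖F i zhalf - F i ω‖*‖zhalf - zplus‖ :=
          real_inner_le_norm _ _
      _ ≤ L*‖zhalf - ω‖*‖zhalf - zplus‖ := by
          have := mul_le_mul_of_nonneg_right (hLip i zhalf ω) (norm_nonneg (zhalf - zplus))
          linarith
  -- piece 2
  have piece2 : μ*‖zhalf - zstar‖^2 - 2*L*‖zhalf - ω‖*‖zhalf - zstar‖
      ≤ ⟪Fhat - (n : ℝ)⁻¹ • ∑ j, F j zstar, zhalf - zstar⟫ := by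
    have hdec : Fhat - (n : ℝ)⁻¹ • ∑ j, F j zstar
        = (((n : ℝ)⁻¹ • ∑ j, F j zhalf) - ((n : ℝ)⁻¹ • ∑ j, F j zstar))
          + ((F i zhalf - F i ω) - (((n : ℝ)⁻¹ • ∑ j, F j zhalf) - ((n : ℝ)⁻¹ • ∑ j, F j ω))) := by
      rw [hFhat]; abel
    rw [hdec, inner_add_left]
    have hΔ : ‖(F i zhalf - F i ω) - (((n : ℝ)⁻¹ • ∑ j, F j zhalf) - ((n : ℝ)⁻¹ • ∑ j, F j ω))‖
        ≤ 2*L*‖zhalf - ω‖ := by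
      have := norm_sub_le (F i zhalf - F i ω)
        (((n : ℝ)⁻¹ • ∑ j, F j zhalf) - ((n : ℝ)⁻¹ • ∑ j, F j ω))
      have h2 := hLip i zhalf ω
      have h3 := havglip zhalf ω
      linarith
    have habs := abs_real_inner_le_norm
      ((F i zhalf - F i ω) - (((n : ℝ)⁻¹ • ∑ j, F j zhalf) - ((n : ℝ)⁻¹ • ∑ j, F j ω)))
      (zhalf - zstar)
    have hneg := neg_abs_le (⟪(F i zhalf - F i ω)
        - (((n : ℝ)⁻¹ • ∑ j, F j zhalf) - ((n : ℝ)⁻¹ • ∑ j, F j ω)), zhalf - zstar⟫ : ℝ)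
    have hmm := mul_le_mul_of_nonneg_right hΔ (norm_nonneg (zhalf - zstar))
    linarith [havgmono]
  -- base inequality
  have hp1 := mul_le_mul_of_nonneg_left piece1 (by positivity : (0:ℝ) ≤ 2*γ)
  have hp2 := mul_le_mul_of_nonneg_left piece2 (by positivity : (0:ℝ) ≤ 2*γ)
  rw [hTid] at base0
  have hsqc := sq_nonneg (γ*L*‖zhalf - ω‖ - ‖zplus - zhalf‖)
  have base : ‖zplus - zstar‖^2 ≤ ‖zbar - zstar‖^2 - ‖zhalf - zbar‖^2
      + (γ*L)^2*‖zhalf - ω‖^2 - 2*(γ*μ)*‖zhalf - zstar‖^2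
      + 4*(γ*L)*(‖zhalf - ω‖*‖zhalf - zstar‖) := by
    linarith [base0, hp1, hp2, hsqc]
  -- key vector inequality
  have hkv := key_vector (zhalf - zbar) (zhalf - zstar) (z - ω) α (γ*μ) (γ*L)
    hα0 hα1 hkpos hk2 hk6 hfpos hf2
  have evA : (zhalf - zstar) - (zhalf - zbar) + (1-α)•(z-ω) = z - zstar := by
    rw [hzbar]; module
  have evB : (zhalf - zstar) - (zhalf - zbar) - α•(z-ω) = ω - zstar := by
    rw [hzbar]; module
  have evU : (zhalf - zbar) + α•(z-ω) = zhalf - ω := by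
    rw [hzbar]; module
  rw [evA, evB, evU] at hkv
  have hiden : α*‖z - zstar‖^2 + (1-α)*‖ω - zstar‖^2
      = ‖zbar - zstar‖^2 + α*(1-α)*‖z - ω‖^2 := by
    have f1 : z - zstar = (zbar - zstar) + (1-α)•(z-ω) := by rw [hzbar]; module
    have f2 : ω - zstar = (zbar - zstar) + (-α)•(z-ω) := by rw [hzbar]; module
    rw [f1, f2, norm_add_sq_real, norm_add_sq_real, real_inner_smul_right,
      real_inner_smul_right, norm_smul, norm_smul, Real.norm_eq_abs, Real.norm_eq_abs,
      mul_pow, mul_pow, sq_abs, sq_abs]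
    ring
  linarith [base, hkv, hiden]
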